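/- Let μ be an eigenvalue of a signed graph Σ with star set S such that for all u ∈ S, ⟨b_u, b_u⟩ = μ and for all distinct u,v ∈ S, ⟨b_u, b_v⟩ ∈ {0,1,−1}, where ⟨x,y⟩ = xᵀ(μI−C)⁻¹y and C is the adjacency matrix of a signed graph Σ' not having μ as an eigenvalue. Then the matrix [[A_S, Bᵀ],[B, C]] with (A_S)_{uv} = −⟨b_u,b_v⟩ for u≠v and zero diagonal is the adjacency matrix of a signed graph having Σ' as a star complement for μ, i.e., μ is an eigenvalue of this matrix with multiplicity |S|. -/

import Mathlib

open Matrix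

/-- The bilinear form `⟨x, y⟩ = xᵀ (μI - C)⁻¹ y` associated with a star complement. -/
noncomputable def starBilin {t : ℕ} (μ : ℝ) (C : Matrix (Fin t) (Fin t) ℝ) (x y : Fin t → ℝ) : ℝ :=
  x ⬝ᵥ ((μ • (1 : Matrix (Fin t) (Fin t) ℝ) - C)⁻¹).mulVec y

theorem star_complement_construction {k t : ℕ}
    (C : Matrix (Fin t) (Fin t) ℝ)
    (hCsymm : C.IsSymm)
    (hCentries : ∀ i j, C i j ∈ ({0, 1, -1} : Set ℝ))
    (hCdiag : ∀ i, C i i = 0)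
    (μ : ℝ)
    (hC : ¬ ∃ v : Fin t → ℝ, v ≠ 0 ∧ C.mulVec v = μ • v)
    (b : Fin k → (Fin t → ℝ))
    (hbentries : ∀ u i, b u i ∈ ({0, 1, -1} : Set ℝ))
    (hbu : ∀ u, starBilin μ C (b u) (b u) = μ)
    (hbuv : ∀ u v, u ≠ v → starBilin μ C (b u) (b v) ∈ ({0, 1, -1} : Set ℝ))
    (AS : Matrix (Fin k) (Fin k) ℝ)
    (hAS : ∀ u v, AS u v = if u = v then 0 else - starBilin μ C (b u) (b v))
    (B : Matrix (Fin t) (Fin k) ℝ) (hB : ∀ i u, B i u = b u i)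
    (A : Matrix (Fin k ⊕ Fin t) (Fin k ⊕ Fin t) ℝ)
    (hA : A = Matrix.fromBlocks AS Bᵀ B C) :
    A.IsSymm ∧
    (∀ p q, A p q ∈ ({0, 1, -1} : Set ℝ)) ∧
    (∀ p, A p p = 0) ∧
    Module.finrank ℝ (Module.End.eigenspace (Matrix.toLin' A) μ) = k := by
  -- Notation
  set M : Matrix (Fin t) (Fin t) ℝ := μ • (1 : Matrix (Fin t) (Fin t) ℝ) - C with hM
  -- M is invertible
  have hMdet : IsUnit M.det := by
    rw [isUnit_iff_ne_zero]
    intro h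
    obtain ⟨v, hv, hv0⟩ := (Matrix.exists_mulVec_eq_zero_iff).mpr h
    refine hC ⟨v, hv, ?_⟩
    rw [hM, Matrix.sub_mulVec, Matrix.smul_mulVec, Matrix.one_mulVec,
      sub_eq_zero] at hv0
    exact hv0.symm
  have hMN : M * M⁻¹ = 1 := Matrix.mul_nonsing_inv M hMdet
  have hNM : M⁻¹ * M = 1 := Matrix.nonsing_inv_mul M hMdet
  have hMsymm : Mᵀ = M := by
    rw [hM, Matrix.transpose_sub, Matrix.transpose_smul, Matrix.transpose_one, hCsymm.eq]
  have hNsymm : (M⁻¹)ᵀ = M⁻¹ := by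
    rw [Matrix.transpose_nonsing_inv, hMsymm]
  -- Symmetry of the bilinear form
  have hsb : ∀ x y : Fin t → ℝ, starBilin μ C x y = starBilin μ C y x := by
    intro x y
    show x ⬝ᵥ M⁻¹.mulVec y = y ⬝ᵥ M⁻¹.mulVec x
    rw [Matrix.dotProduct_mulVec, ← Matrix.mulVec_transpose, hNsymm, dotProduct_comm]
  -- AS is symmetric
  have hASsymm : ASᵀ = AS := by
    ext u v
    rw [Matrix.transpose_apply, hAS, hAS]
    by_cases h : u = v
    · simp [h]
    · simp only [h, Ne.symm h, if_false, hsb (b u) (b v)]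
  -- The key matrix identity
  have hBNB : ∀ u v, (Bᵀ * M⁻¹ * B) u v = starBilin μ C (b u) (b v) := by
    intro u v
    show _ = (b u) ⬝ᵥ M⁻¹.mulVec (b v)
    rw [Matrix.mul_apply]
    simp only [Matrix.mul_apply, Matrix.transpose_apply, dotProduct, Matrix.mulVec,
      Finset.sum_mul, Finset.mul_sum, hB]
    rw [Finset.sum_comm]
    apply Finset.sum_congr rfl
    intro i _
    apply Finset.sum_congr rfl
    intro j _
    ring
  have hkey : AS + Bᵀ * M⁻¹ * B = μ • (1 : Matrix (Fin k) (Fin k) ℝ) := by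
    ext u v
    rw [Matrix.add_apply, hAS, hBNB]
    by_cases h : u = v
    · subst h
      simp [hbu u]
    · simp [h, Matrix.one_apply]
  -- The linear map whose range is the eigenspace
  set W : Matrix (Fin t) (Fin k) ℝ := M⁻¹ * B with hW
  have hMW : M * W = B := by
    rw [hW, ← Matrix.mul_assoc, hMN, Matrix.one_mul]
  set L : (Fin k → ℝ) →ₗ[ℝ] (Fin k ⊕ Fin t → ℝ) :=
    { toFun := fun x => Sum.elim x (W.mulVec x)
      map_add' := by
        intro x y
        funext p
        cases p <;> simp [Matrix.mulVec_add]
      map_smul' := by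
        intro c x
        funext p
        cases p <;> simp [Matrix.mulVec_smul] } with hL
  have hLapp : ∀ x, L x = Sum.elim x (W.mulVec x) := fun x => rfl
  have hinj : Function.Injective L := by
    intro x y h
    funext a
    have := congrFun h (Sum.inl a)
    simpa [hLapp] using this
  have hmem : ∀ v, v ∈ Module.End.eigenspace (Matrix.toLin' A) μ ↔ A.mulVec v = μ • v := by
    intro v
    rw [Module.End.mem_eigenspace_iff, Matrix.toLin'_apply]
  have hrange : LinearMap.range L = Module.End.eigenspace (Matrix.toLin' A) μ := by
    ext v
    rw [hmem]
    constructor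
    · rintro ⟨x, rfl⟩
      rw [hLapp, hA, Matrix.fromBlocks_mulVec]
      have h1 : AS.mulVec x + Bᵀ.mulVec (W.mulVec x) = μ • x := by
        rw [Matrix.mulVec_mulVec, ← Matrix.add_mulVec, ← Matrix.mul_assoc, hkey,
          Matrix.smul_mulVec, Matrix.one_mulVec]
      have h2 : B.mulVec x + C.mulVec (W.mulVec x) = μ • W.mulVec x := by
        rw [Matrix.mulVec_mulVec, ← Matrix.add_mulVec]
        have hBCW : B + C * W = μ • W := by
          have h3 : μ • W - C * W = B := by
            rw [← hMW, hM, Matrix.sub_mul, Matrix.smul_mul, Matrix.one_mul]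
          rw [← h3, sub_add_cancel]
        rw [hBCW, Matrix.smul_mulVec]
      funext p
      cases p with
      | inl a => simpa using congrFun h1 a
      | inr i => simpa using congrFun h2 i
    · intro hv
      refine ⟨v ∘ Sum.inl, ?_⟩
      set x := v ∘ Sum.inl
      set y := v ∘ Sum.inr
      have hveq : v = Sum.elim x y := by
        funext p; cases p <;> rfl
      have hblock := hv
      rw [hA, Matrix.fromBlocks_mulVec] at hblock
      have h2 : B.mulVec x + C.mulVec y = μ • y := by
        funext i
        have := congrFun hblock (Sum.inr i)
        simp at this; exact this
      have hMy : M.mulVec y = B.mulVec x := by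
        rw [hM, Matrix.sub_mulVec, Matrix.smul_mulVec, Matrix.one_mulVec, ← h2]
        abel
      have hy : y = W.mulVec x := by
        have := congrArg (M⁻¹.mulVec ·) hMy
        simpa [Matrix.mulVec_mulVec, hNM, hW] using this
      rw [hLapp, ← hy, ← hveq]
  have hfr := LinearMap.finrank_range_of_inj hinj
  rw [hrange, Module.finrank_fin_fun] at hfr
  -- Now the four parts
  refine ⟨?_, ?_, ?_, hfr⟩
  · rw [hA]
    show (Matrix.fromBlocks AS Bᵀ B C)ᵀ = _
    rw [Matrix.fromBlocks_transpose, hASsymm, Matrix.transpose_transpose, hCsymm.eq]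
  · intro p q
    rw [hA]
    cases p with
    | inl u =>
      cases q with
      | inl v =>
        show AS u v ∈ _
        rw [hAS]
        by_cases h : u = v
        · simp [h]
        · simp only [h, if_false]
          have hm := hbuv u v h
          simp only [Set.mem_insert_iff, Set.mem_singleton_iff] at hm ⊢
          rcases hm with h0 | h0 | h0 <;> rw [h0] <;> norm_num
      | inr j =>
        show Bᵀ u j ∈ _
        rw [Matrix.transpose_apply, hB]
        exact hbentries u j
    | inr i =>
      cases q with
      | inl v =>
        show B i v ∈ _
        rw [hB]
        exact hbentries v i
      | inr j =>
        exact hCentries i j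
  · intro p
    rw [hA]
    cases p with
    | inl u =>
      show AS u u = 0
      rw [hAS]; simp
    | inr i =>
      exact hCdiag i
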